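/- Let a₁ be a nonzero real constant. The vector fields X₁, X₂, X₃ on ℝ⁷ satisfy the commutation relations [X₁, X₂] = 2·X₁, [X₁, X₃] = 0 and [X₂, X₃] = 0 (as equalities of maps ℝ⁷ → ℝ⁷). -/
import Mathlib


noncomputable section

/-- ℝ⁷ with coordinates `(t,x,y,z,u,v,w)` indexed by `0,…,6`. -/
abbrev R7 : Type := Fin 7 → ℝ

/-- The Lie bracket of two vector fields `A B : R7 → R7`:
`[A,B](p) = DB(p)·A(p) − DA(p)·B(p)`. -/
def bracket (A B : R7 → R7) : R7 → R7 :=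
  fun p => fderiv ℝ B p (A p) - fderiv ℝ A p (B p)

/-- `X₁ = ∂t`. -/
def X1 : R7 → R7 := fun _ => ![1, 0, 0, 0, 0, 0, 0]

/-- `X₂ = 2t∂t + x∂x + y∂y + z∂z − u∂u − v∂v − 2w∂w`. -/
def X2 : R7 → R7 := fun p => ![2 * p 0, p 1, p 2, p 3, -p 4, -p 5, -2 * p 6]

/-- `X₃ = z∂x − x∂z`. -/
def X3 : R7 → R7 := fun p => ![0, p 3, 0, -p 1, 0, 0, 0]

/-- `Y(f) = f(t)∂x − (x/2)[f'(t)(v∂u − u∂v) + f''(t)∂w]`. -/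
def Yf (f : ℝ → ℝ) : R7 → R7 := fun p =>
  ![0, f (p 0), 0, 0,
    -(p 1 / 2) * (deriv f (p 0) * p 5),
    (p 1 / 2) * (deriv f (p 0) * p 4),
    -(p 1 / 2) * deriv (deriv f) (p 0)]

/-- `Z(f) = f(t)∂y − (y/(2a₁))[f'(t)(v∂u − u∂v) + f''(t)∂w]`. -/
def Zf (a₁ : ℝ) (f : ℝ → ℝ) : R7 → R7 := fun p =>
  ![0, 0, f (p 0), 0,
    -(p 2 / (2 * a₁)) * (deriv f (p 0) * p 5),
    (p 2 / (2 * a₁)) * (deriv f (p 0) * p 4),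
    -(p 2 / (2 * a₁)) * deriv (deriv f) (p 0)]

/-- `Q(f) = f(t)∂z − (z/2)[f'(t)(v∂u − u∂v) + f''(t)∂w]`. -/
def Qf (f : ℝ → ℝ) : R7 → R7 := fun p =>
  ![0, 0, 0, f (p 0),
    -(p 3 / 2) * (deriv f (p 0) * p 5),
    (p 3 / 2) * (deriv f (p 0) * p 4),
    -(p 3 / 2) * deriv (deriv f) (p 0)]

/-- `W(f) = f(t)(v∂u − u∂v) + f'(t)∂w`. -/
def Wf (f : ℝ → ℝ) : R7 → R7 := fun p =>
  ![0, 0, 0, 0, f (p 0) * p 5, -(f (p 0) * p 4), deriv f (p 0)]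

lemma cons_val_five {α : Type*} (a b c d e f g : α) :
    (![a,b,c,d,e,f,g] : Fin 7 → α) 5 = f := rfl

lemma cons_val_six {α : Type*} (a b c d e f g : α) :
    (![a,b,c,d,e,f,g] : Fin 7 → α) 6 = g := rfl

/-- The linear map underlying `X2`. -/
def L2 : R7 →L[ℝ] R7 :=
  ContinuousLinearMap.pi fun i =>
    (![2, 1, 1, 1, -1, -1, -2] : Fin 7 → ℝ) i • ContinuousLinearMap.proj i

/-- The linear map underlying `X3`. -/
def L3 : R7 →L[ℝ] R7 :=
  ContinuousLinearMap.pi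
    ![0, ContinuousLinearMap.proj 3, 0, -ContinuousLinearMap.proj 1, 0, 0, 0]

lemma X2_eq : X2 = ⇑L2 := by
  funext p
  funext i
  fin_cases i <;>
    simp [X2, L2, Matrix.cons_val_succ, cons_val_five, cons_val_six] <;> ring

lemma X3_eq : X3 = ⇑L3 := by
  funext p
  funext i
  fin_cases i <;>
    simp [X3, L3, Matrix.cons_val_succ, cons_val_five, cons_val_six]

lemma fderiv_X1 (p : R7) : fderiv ℝ X1 p = 0 := by
  exact fderiv_const_apply _

lemma fderiv_X2 (p : R7) : fderiv ℝ X2 p = L2 := by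
  rw [X2_eq]; exact L2.fderiv

lemma fderiv_X3 (p : R7) : fderiv ℝ X3 p = L3 := by
  rw [X3_eq]; exact L3.fderiv

theorem stmt0 (a₁ : ℝ) (ha₁ : a₁ ≠ 0) :
    bracket X1 X2 = (2 : ℝ) • X1 ∧ bracket X1 X3 = 0 ∧ bracket X2 X3 = 0 := by
  refine ⟨?_, ?_, ?_⟩ <;>
  · funext p
    funext i
    simp only [bracket, fderiv_X1, fderiv_X2, fderiv_X3]
    fin_cases i <;>
      simp [X1, X2, X3, L2, L3, Matrix.cons_val_succ, cons_val_five, cons_val_six] <;> ring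

end
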